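/- Let X ~ Heine(λ) with parameter 0 < q < 1, λ > 0, and let 1 < a < 1/q. Then p_j = o(a^{-j(j-1)/2}) as j → ∞; hence no perturbation exists for the distribution of Y = a^X. -/

import Mathlib

open Filter Finset

private lemma tri_succ' (j : ℕ) : (j+1)*((j+1)-1)/2 = j*(j-1)/2 + j := by
  rw [← Finset.sum_range_id, ← Finset.sum_range_id]
  simp [Finset.sum_range_succ]

private lemma tri_add' (m n : ℕ) : (m+n)*((m+n)-1)/2 = m*(m-1)/2 + m*n + n*(n-1)/2 := by
  induction n with
  | zero => simp
  | succ n ih =>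
    have h1 := tri_succ' (m+n)
    have h2 := tri_succ' n
    have h3 : m * (n+1) = m * n + m := by ring
    rw [← Nat.add_assoc, h1, ih, h2, h3]
    omega

private lemma summable_qpow' {r b : ℝ} (hr0 : 0 ≤ r) (hr1 : r < 1) (hb : 0 ≤ b) :
    Summable fun j : ℕ => b^j * r^(j*(j-1)/2) := by
  apply summable_of_ratio_norm_eventually_le (r := 1/2) (by norm_num)
  have h : Tendsto (fun n : ℕ => b * r^n) atTop (nhds 0) := by
    simpa using (tendsto_pow_atTop_nhds_zero_of_lt_one hr0 hr1).const_mul b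
  filter_upwards [h.eventually_le_const (by norm_num : (0:ℝ) < 1/2)] with n hn
  have hfe : b^(n+1) * r^((n+1)*((n+1)-1)/2) = (b * r^n) * (b^n * r^(n*(n-1)/2)) := by
    rw [tri_succ', pow_add, pow_succ]; ring
  rw [hfe, Real.norm_eq_abs, Real.norm_eq_abs, abs_mul]
  rw [abs_of_nonneg (show (0:ℝ) ≤ b * r^n by positivity)]
  exact mul_le_mul_of_nonneg_right hn (abs_nonneg _)


private lemma weier' (s : Finset ℕ) (x : ℕ → ℝ) (h0 : ∀ i ∈ s, 0 ≤ x i) (h1 : ∀ i ∈ s, x i ≤ 1) :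
    1 - ∑ i ∈ s, x i ≤ ∏ i ∈ s, (1 - x i) := by
  induction s using Finset.induction with
  | empty => simp
  | insert a s hni ih =>
    rw [Finset.sum_insert hni, Finset.prod_insert hni]
    have ha0 := h0 a (Finset.mem_insert_self a s)
    have ha1 := h1 a (Finset.mem_insert_self a s)
    have ihs := ih (fun i hi => h0 i (Finset.mem_insert_of_mem hi))
      (fun i hi => h1 i (Finset.mem_insert_of_mem hi))
    have hs0 : 0 ≤ x a * ∑ i ∈ s, x i :=
      mul_nonneg ha0 (Finset.sum_nonneg (fun i hi => h0 i (Finset.mem_insert_of_mem hi)))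
    nlinarith [mul_le_mul_of_nonneg_left ihs (sub_nonneg.2 ha1)]

private lemma prod_lb' {b : ℝ} (hb0 : 0 < b) (hb1 : b < 1) :
    ∃ C > 0, ∀ m : ℕ, C ≤ ∏ d ∈ Finset.range m, (1 - b^(d+1)) := by
  have h1b : 0 < 1 - b := by linarith
  have htend : Tendsto (fun n : ℕ => b^(n+1) * (1-b)⁻¹) atTop (nhds 0) := by
    have := (tendsto_pow_atTop_nhds_zero_of_lt_one hb0.le hb1).mul_const (b * (1-b)⁻¹)
    simp only [zero_mul] at this
    exact this.congr (fun n => by rw [pow_succ]; ring)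
  obtain ⟨d₀, hd₀⟩ := (htend.eventually_le_const (by norm_num : (0:ℝ) < 1/2)).exists
  refine ⟨(1-b)^d₀ * (1/2), by positivity, fun m => ?_⟩
  have hfac : ∀ d : ℕ, 1 - b ≤ 1 - b^(d+1) := by
    intro d
    have : b^(d+1) ≤ b := by
      calc b^(d+1) ≤ b^1 := pow_le_pow_of_le_one hb0.le hb1.le (by omega)
      _ = b := pow_one b
    linarith
  rcases le_or_gt m d₀ with hm | hm
  · calc (1-b)^d₀ * (1/2) ≤ (1-b)^m * 1 := by
          apply mul_le_mul (pow_le_pow_of_le_one h1b.le (by linarith) hm) (by norm_num)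
            (by norm_num) (by positivity)
        _ = ∏ d ∈ Finset.range m, (1-b) := by simp
        _ ≤ ∏ d ∈ Finset.range m, (1 - b^(d+1)) := by
          apply Finset.prod_le_prod (fun i _ => h1b.le) (fun i _ => hfac i)
  · rw [← Finset.prod_range_mul_prod_Ico _ hm.le]
    have hA : (1-b)^d₀ ≤ ∏ d ∈ Finset.range d₀, (1 - b^(d+1)) := by
      calc (1-b)^d₀ = ∏ d ∈ Finset.range d₀, (1-b) := by simp
      _ ≤ _ := Finset.prod_le_prod (fun i _ => h1b.le) (fun i _ => hfac i)
    have hB : (1/2 : ℝ) ≤ ∏ d ∈ Finset.Ico d₀ m, (1 - b^(d+1)) := by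
      have hsum : ∑ d ∈ Finset.Ico d₀ m, b^(d+1) ≤ 1/2 := by
        have hrw : ∑ d ∈ Finset.Ico d₀ m, b^(d+1) = ∑ j ∈ Finset.range (m - d₀), b^(d₀+1) * b^j := by
          rw [Finset.sum_Ico_eq_sum_range]
          exact Finset.sum_congr rfl (fun j _ => by rw [← pow_add]; ring_nf)
        have hsm : Summable (fun j : ℕ => b^(d₀+1) * b^j) :=
          (summable_geometric_of_lt_one hb0.le hb1).mul_left _
        calc ∑ d ∈ Finset.Ico d₀ m, b^(d+1) ≤ ∑' j : ℕ, b^(d₀+1) * b^j := by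
              rw [hrw]
              exact Summable.sum_le_tsum _ (fun i _ => by positivity) hsm
          _ = b^(d₀+1) * (1-b)⁻¹ := by
              rw [tsum_mul_left, tsum_geometric_of_lt_one hb0.le hb1]
          _ ≤ 1/2 := hd₀
      calc (1/2:ℝ) ≤ 1 - ∑ d ∈ Finset.Ico d₀ m, b^(d+1) := by linarith
      _ ≤ _ := weier' _ _ (fun i _ => by positivity)
            (fun i _ => by nlinarith [pow_pos hb0 (i+1), pow_le_one₀ hb0.le hb1.le (n := i+1)])
    calc (1-b)^d₀ * (1/2) ≤ (∏ d ∈ Finset.range d₀, (1 - b^(d+1))) * ∏ d ∈ Finset.Ico d₀ m, (1 - b^(d+1)) := by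
          apply mul_le_mul hA hB (by norm_num) (le_trans (by positivity) hA)
      _ = _ := rfl

private lemma prodD' {a : ℝ} (ha : 1 < a) :
    ∃ C > 0, ∀ m : ℕ, C * a^(m*m) ≤ ∏ i ∈ Finset.range m, (a^m - a^i) := by
  have ha0 : (0:ℝ) < a := by linarith
  have hb0 : 0 < a⁻¹ := by positivity
  have hb1 : a⁻¹ < 1 := by rw [inv_lt_one_iff₀]; right; exact ha
  obtain ⟨C, hC0, hC⟩ := prod_lb' hb0 hb1
  refine ⟨C, hC0, fun m => ?_⟩
  have key : ∀ i ∈ Finset.range m, a^m - a^i = a^m * (1 - (a⁻¹)^(m-i)) := by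
    intro i hi
    have him : i ≤ m := (Finset.mem_range.1 hi).le
    have : a^m * (a⁻¹)^(m-i) = a^i := by
      rw [inv_pow, ← Nat.sub_add_cancel him, pow_add]
      field_simp
      rw [Nat.add_sub_cancel]
    rw [mul_sub, mul_one, this]
  rw [Finset.prod_congr rfl key, Finset.prod_mul_distrib, Finset.prod_const, ← pow_mul]
  have hrefl : ∏ i ∈ Finset.range m, (1 - (a⁻¹)^(m-i)) = ∏ d ∈ Finset.range m, (1 - (a⁻¹)^(d+1)) := by
    rw [← Finset.prod_range_reflect]
    apply Finset.prod_congr rfl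
    intro j hj
    have : m - (m - 1 - j) = j + 1 := by have := Finset.mem_range.1 hj; omega
    rw [this]
  rw [hrefl, Finset.card_range, mul_comm m m]
  calc C * a^(m*m) = a^(m*m) * C := by ring
    _ ≤ a^(m*m) * ∏ d ∈ Finset.range m, (1 - a⁻¹^(d+1)) :=
        mul_le_mul_of_nonneg_left (hC m) (by positivity)


/-- Log-Heine, `1 < a < 1/q`: the Heine probabilities satisfy `p_j = o(a^{-j(j-1)/2})`;
hence no perturbation exists for the law of `Y = a^X`. -/
theorem log_heine_no_stieltjes (q lam a : ℝ) (hq0 : 0 < q) (hq1 : q < 1)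
    (hlam : 0 < lam) (ha1 : 1 < a) (ha2 : a < 1 / q)
    (p : ℕ → ℝ)
    (hpdef : ∀ j : ℕ, p j = (∏' s : ℕ, (1 + lam * (1 - q) * q ^ s))⁻¹ *
      q ^ (j * (j - 1) / 2) * (lam * (1 - q)) ^ j /
        ∏ s ∈ Finset.range j, (1 - q ^ (s + 1))) :
    ((fun j : ℕ => p j) =o[atTop] fun j : ℕ => (a ^ (j * (j - 1) / 2))⁻¹) ∧
    ¬ ∃ h : ℕ → ℝ, h ≠ 0 ∧ (∃ M : ℝ, ∀ j, |h j| ≤ M) ∧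
        ∀ k : ℕ, (∑' j : ℕ, a ^ (k * j) * p j * h j) = 0 := by
  have ha0 : (0:ℝ) < a := lt_trans one_pos ha1
  have hqa : q * a < 1 := by
    have := (mul_lt_mul_of_pos_left ha2 hq0)
    rwa [mul_one_div, div_self (ne_of_gt hq0)] at this
  have hqa0 : 0 ≤ q * a := by positivity
  have h1q : 0 < 1 - q := by linarith
  -- the normalizing constant
  set P : ℝ := ∏' s : ℕ, (1 + lam * (1 - q) * q ^ s) with hPdef
  have hP1 : 1 ≤ P := by
    by_cases hmul : Multipliable (fun s : ℕ => 1 + lam * (1 - q) * q ^ s)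
    · apply ge_of_tendsto' hmul.hasProd
      intro s
      show (1:ℝ) ≤ ∏ i ∈ s, (1 + lam * (1 - q) * q ^ i)
      calc (1:ℝ) = ∏ i ∈ s, 1 := by simp
        _ ≤ ∏ i ∈ s, (1 + lam * (1 - q) * q ^ i) := by
            apply Finset.prod_le_prod (fun i _ => zero_le_one)
            intro i _
            nlinarith [mul_pos (mul_pos hlam h1q) (pow_pos hq0 i)]
    · rw [hPdef, tprod_eq_one_of_not_multipliable hmul]
  have hP0 : 0 < P := lt_of_lt_of_le one_pos hP1
  -- bounds for p
  have hQpos : ∀ j : ℕ, 0 < ∏ s ∈ Finset.range j, (1 - q ^ (s + 1)) := by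
    intro j
    apply Finset.prod_pos
    intro i _
    have : q ^ (i + 1) < 1 := pow_lt_one₀ hq0.le hq1 (by omega)
    linarith
  have hQge : ∀ j : ℕ, (1 - q)^j ≤ ∏ s ∈ Finset.range j, (1 - q ^ (s + 1)) := by
    intro j
    calc (1-q)^j = ∏ s ∈ Finset.range j, (1 - q) := by simp
      _ ≤ _ := by
        apply Finset.prod_le_prod (fun i _ => h1q.le)
        intro i _
        have : q ^ (i+1) ≤ q := by
          calc q^(i+1) ≤ q^1 := pow_le_pow_of_le_one hq0.le hq1.le (by omega)
            _ = q := pow_one q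
        linarith
  have hppos : ∀ j, 0 < p j := by
    intro j
    rw [hpdef j]
    apply div_pos ?_ (hQpos j)
    have h1 : (0:ℝ) < lam * (1 - q) := by positivity
    exact mul_pos (mul_pos (inv_pos.2 hP0) (pow_pos hq0 _)) (pow_pos h1 _)
  have hple : ∀ j, p j ≤ P⁻¹ * (q ^ (j*(j-1)/2) * lam^j) := by
    intro j
    rw [hpdef j, div_le_iff₀ (hQpos j)]
    have hexp : (lam * (1-q))^j = lam^j * (1-q)^j := mul_pow _ _ _
    calc P⁻¹ * q ^ (j*(j-1)/2) * (lam * (1-q))^j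
        = (P⁻¹ * (q ^ (j*(j-1)/2) * lam^j)) * (1-q)^j := by rw [hexp]; ring
      _ ≤ (P⁻¹ * (q ^ (j*(j-1)/2) * lam^j)) * ∏ s ∈ Finset.range j, (1 - q ^ (s + 1)) := by
          apply mul_le_mul_of_nonneg_left (hQge j)
          positivity
  -- Part 1
  have part1 : (fun j : ℕ => p j) =o[atTop] fun j : ℕ => (a ^ (j * (j - 1) / 2))⁻¹ := by
    have hne0 : ∀ j : ℕ, ((a : ℝ) ^ (j*(j-1)/2))⁻¹ = 0 → p j = 0 :=
      fun j hj => absurd hj (inv_ne_zero (ne_of_gt (pow_pos ha0 _)))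
    rw [Asymptotics.isLittleO_iff_tendsto hne0]
    have heq : ∀ j : ℕ, p j / (a ^ (j*(j-1)/2))⁻¹ = p j * a ^ (j*(j-1)/2) := by
      intro j; rw [div_eq_mul_inv, inv_inv]
    rw [show (fun j : ℕ => p j / (a ^ (j*(j-1)/2))⁻¹) = fun j : ℕ => p j * a ^ (j*(j-1)/2)
      from funext heq]
    apply squeeze_zero (g := fun j : ℕ => P⁻¹ * (lam^j * (q*a)^(j*(j-1)/2)))
    · intro j; exact mul_nonneg (hppos j).le (pow_nonneg ha0.le _)
    · intro j
      calc p j * a ^ (j*(j-1)/2) ≤ (P⁻¹ * (q ^ (j*(j-1)/2) * lam^j)) * a ^ (j*(j-1)/2) :=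
            mul_le_mul_of_nonneg_right (hple j) (pow_nonneg ha0.le _)
        _ = P⁻¹ * (lam^j * (q*a)^(j*(j-1)/2)) := by rw [mul_pow]; ring
    · have := (summable_qpow' hqa0 hqa hlam.le).tendsto_atTop_zero.const_mul P⁻¹
      simpa using this
  refine ⟨part1, ?_⟩
  rintro ⟨h, hne, ⟨M, hM⟩, hmom⟩
  have hM0 : 0 ≤ M := le_trans (abs_nonneg _) (hM 0)
  set c : ℕ → ℝ := fun j => p j * h j with hcdef
  set K₀ : ℝ := P⁻¹ * M with hK₀
  have hK₀0 : 0 ≤ K₀ := mul_nonneg (inv_nonneg.2 hP0.le) hM0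
  have hcbd : ∀ j, |c j| ≤ K₀ * (q ^ (j*(j-1)/2) * lam^j) := by
    intro j
    rw [hcdef]
    simp only []
    rw [abs_mul, abs_of_pos (hppos j)]
    calc p j * |h j| ≤ (P⁻¹ * (q ^ (j*(j-1)/2) * lam^j)) * M :=
          mul_le_mul (hple j) (hM j) (abs_nonneg _)
            (mul_nonneg (inv_nonneg.2 hP0.le) (by positivity))
      _ = K₀ * (q ^ (j*(j-1)/2) * lam^j) := by rw [hK₀]; ring
  -- summability of the basic series
  have hsumm : ∀ b : ℝ, 0 ≤ b → Summable (fun j : ℕ => b^j * q^(j*(j-1)/2)) :=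
    fun b hb => summable_qpow' hq0.le hq1 hb
  -- summability of the manipulated series
  have hSw : ∀ m k : ℕ,
      Summable (fun j : ℕ => a^(k*j) * (∏ i ∈ Finset.range m, (a^j - a^i)) * c j) := by
    intro m k
    apply Summable.of_norm_bounded
      (g := fun j : ℕ => (a^(m*m) * K₀) * ((a^k * a^m * lam)^j * q^(j*(j-1)/2)))
      (((hsumm (a^k * a^m * lam) (by positivity)).mul_left _))
    intro j
    rw [Real.norm_eq_abs, abs_mul, abs_mul]
    have hw : |∏ i ∈ Finset.range m, (a^j - a^i)| ≤ a^(m*m) * (a^m)^j := by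
      rw [Finset.abs_prod]
      calc ∏ i ∈ Finset.range m, |a^j - a^i| ≤ ∏ i ∈ Finset.range m, a^(j+m) := by
            apply Finset.prod_le_prod (fun i _ => abs_nonneg _)
            intro i hi
            rw [abs_sub_le_iff]
            have hi' : i < m := Finset.mem_range.1 hi
            have h1 : a^j ≤ a^(j+m) := pow_le_pow_right₀ ha1.le (by omega)
            have h2 : a^i ≤ a^(j+m) := pow_le_pow_right₀ ha1.le (by omega)
            have h3 : 0 < a^j := pow_pos ha0 j
            have h4 : 0 < a^i := pow_pos ha0 i
            constructor <;> linarith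
        _ = (a^(j+m))^m := by rw [Finset.prod_const, Finset.card_range]
        _ = a^(m*m) * (a^m)^j := by
            rw [← pow_mul, ← pow_mul, ← pow_add]; congr 1; ring
    calc |a^(k*j)| * |∏ i ∈ Finset.range m, (a^j - a^i)| * |c j|
        ≤ a^(k*j) * (a^(m*m) * (a^m)^j) * (K₀ * (q^(j*(j-1)/2) * lam^j)) := by
          apply mul_le_mul
          · apply mul_le_mul (le_of_eq (abs_of_pos (pow_pos ha0 _))) hw (abs_nonneg _)
              (by positivity)
          · exact hcbd j
          · exact abs_nonneg _
          · positivity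
      _ = (a^(m*m) * K₀) * ((a^k * a^m * lam)^j * q^(j*(j-1)/2)) := by
          rw [pow_mul, mul_pow, mul_pow]; ring
  -- Step A : elimination
  have hStepA : ∀ m k : ℕ,
      (∑' j : ℕ, a^(k*j) * (∏ i ∈ Finset.range m, (a^j - a^i)) * c j) = 0 := by
    intro m
    induction m with
    | zero =>
      intro k
      have := hmom k
      rw [← this]
      apply tsum_congr
      intro j
      simp [hcdef]; ring
    | succ m ih =>
      intro k
      have e : ∀ j : ℕ, a^(k*j) * (∏ i ∈ Finset.range (m+1), (a^j - a^i)) * c j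
          = (a^((k+1)*j) * (∏ i ∈ Finset.range m, (a^j - a^i)) * c j)
            - a^m * (a^(k*j) * (∏ i ∈ Finset.range m, (a^j - a^i)) * c j) := by
        intro j
        rw [Finset.prod_range_succ]
        have : a^((k+1)*j) = a^(k*j) * a^j := by rw [← pow_add]; congr 1; ring
        rw [this]; ring
      rw [tsum_congr e, Summable.tsum_sub (hSw m (k+1)) ((hSw m k).mul_left (a^m)),
        tsum_mul_left, ih (k+1), ih k]
      ring
  -- abbreviations for the master estimate
  set Λ : ℝ := max lam 1 with hΛdef
  have hΛ1 : 1 ≤ Λ := le_max_right _ _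
  have hΛ0 : 0 < Λ := lt_of_lt_of_le one_pos hΛ1
  have hlamΛ : lam ≤ Λ := le_max_left _ _
  have hT₀sum : Summable (fun d : ℕ => Λ^d * q^((d+1)*((d+1)-1)/2)) := by
    apply Summable.of_nonneg_of_le (fun d => by positivity) ?_ (hsumm Λ hΛ0.le)
    intro d
    apply mul_le_mul_of_nonneg_left ?_ (by positivity)
    rw [tri_succ']
    calc q^(d*(d-1)/2 + d) = q^(d*(d-1)/2) * q^d := pow_add q _ _
      _ ≤ q^(d*(d-1)/2) * 1 :=
          mul_le_mul_of_nonneg_left (pow_le_one₀ hq0.le hq1.le) (by positivity)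
      _ = q^(d*(d-1)/2) := mul_one _
  set T₀ : ℝ := ∑' d : ℕ, Λ^d * q^((d+1)*((d+1)-1)/2) with hT₀def
  have hT₀0 : 0 ≤ T₀ := tsum_nonneg (fun d => by positivity)
  obtain ⟨C, hC0, hC⟩ : ∃ C > 0, ∀ m : ℕ, C * a^(m*m) ≤ ∏ i ∈ Finset.range m, (a^m - a^i) :=
    prodD' ha1
  set β : ℝ := T₀ * Λ / C with hβdef
  have hβ0 : 0 ≤ β := by positivity
  have hstep : ∀ K μ : ℝ, 0 ≤ K → 0 < μ → μ ≤ Λ →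
      (∀ j, |c j| ≤ K * (q^(j*(j-1)/2) * μ^j)) →
      ∀ m, |c m| ≤ (K * β) * (q^(m*(m-1)/2) * ((q*a)*μ)^m) := by
    intro K μ hK hμ0 hμΛ hcb m
    set f : ℕ → ℝ := fun j => (∏ i ∈ Finset.range m, (a^j - a^i)) * c j with hfdef
    have hSf : Summable f := by
      have := hSw m 0
      simp only [Nat.zero_mul, pow_zero, one_mul] at this
      exact this
    have hf0 : ∑' j, f j = 0 := by
      have := hStepA m 0
      simp only [Nat.zero_mul, pow_zero, one_mul] at this
      exact this
    have hhead : ∑ i ∈ Finset.range m, f i = 0 := by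
      apply Finset.sum_eq_zero
      intro i hi
      show (∏ i' ∈ Finset.range m, (a^i - a^i')) * c i = 0
      rw [Finset.prod_eq_zero hi (sub_self (a^i))]
      ring
    have hshift : ∑' i, f (i + m) = 0 := by
      have hsplit := hSf.sum_add_tsum_nat_add m
      rw [hhead, hf0] at hsplit
      linarith
    have hSfm : Summable (fun i => f (i + m)) := (summable_nat_add_iff m).2 hSf
    have hzero : f m + ∑' d : ℕ, f (d + 1 + m) = 0 := by
      have h2 := Summable.tsum_eq_zero_add hSfm
      rw [hshift] at h2
      simpa using h2.symm
    set Big : ℝ := K * a^(m*m) * (q^(m*(m-1)/2) * μ^m) * ((q*a)^m * μ) with hBigdef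
    have hBig0 : 0 ≤ Big := by
      have : (0:ℝ) ≤ (q*a)^m * μ := mul_nonneg (pow_nonneg hqa0 m) hμ0.le
      have h2 : (0:ℝ) ≤ q^(m*(m-1)/2) * μ^m := mul_nonneg (pow_nonneg hq0.le _) (pow_nonneg hμ0.le _)
      have h3 : (0:ℝ) ≤ a^(m*m) := pow_nonneg ha0.le _
      positivity
    have habs : ∀ d : ℕ, |f (d + 1 + m)| ≤ Big * (Λ^d * q^((d+1)*((d+1)-1)/2)) := by
      intro d
      show |(∏ i ∈ Finset.range m, (a^(d+1+m) - a^i)) * c (d+1+m)| ≤ _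
      rw [abs_mul]
      have hw : |∏ i ∈ Finset.range m, (a^(d+1+m) - a^i)| ≤ (a^(d+1+m))^m := by
        rw [Finset.abs_prod]
        calc ∏ i ∈ Finset.range m, |a^(d+1+m) - a^i|
            ≤ ∏ i ∈ Finset.range m, a^(d+1+m) := by
              apply Finset.prod_le_prod (fun i _ => abs_nonneg _)
              intro i hi
              have hi' : i < m := Finset.mem_range.1 hi
              have h1 : a^i ≤ a^(d+1+m) := pow_le_pow_right₀ ha1.le (by omega)
              have h2 : 0 < a^i := pow_pos ha0 i
              rw [abs_of_nonneg (by linarith)]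
              linarith
          _ = (a^(d+1+m))^m := by rw [Finset.prod_const, Finset.card_range]
      have hstep1 : |∏ i ∈ Finset.range m, (a^(d+1+m) - a^i)| * |c (d+1+m)|
          ≤ (a^(d+1+m))^m * (K * (q^((d+1+m)*((d+1+m)-1)/2) * μ^(d+1+m))) :=
        mul_le_mul hw (hcb _) (abs_nonneg _) (pow_nonneg (pow_nonneg ha0.le _) m)
      refine hstep1.trans ?_
      -- exponent bookkeeping
      have hE2 : (d+1+m)*((d+1+m)-1)/2 = m*(m-1)/2 + m*(d+1) + (d+1)*((d+1)-1)/2 := by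
        rw [show d+1+m = m+(d+1) from by omega]
        exact tri_add' m (d+1)
      have hE3 : d+1+m = m + (d+1) := by omega
      have hfact : (a^(d+1+m))^m * (K * (q^((d+1+m)*((d+1+m)-1)/2) * μ^(d+1+m)))
          = (K * a^(m*m) * (q^(m*(m-1)/2) * μ^m) * (μ * q^((d+1)*((d+1)-1)/2)))
            * (((q*a)^m)^(d+1) * μ^d) := by
        rw [hE2, hE3]
        ring
      rw [hfact]
      have hcore : ((q*a)^m)^(d+1) * μ^d ≤ (q*a)^m * Λ^d := by
        have hle1 : (q*a)^m ≤ 1 := pow_le_one₀ hqa0 hqa.le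
        have hnn : 0 ≤ (q*a)^m := pow_nonneg hqa0 m
        calc ((q*a)^m)^(d+1) * μ^d = (q*a)^m * (((q*a)^m * μ)^d) := by
              rw [pow_succ, mul_pow]; ring
          _ ≤ (q*a)^m * Λ^d := by
              apply mul_le_mul_of_nonneg_left ?_ hnn
              apply pow_le_pow_left₀ (mul_nonneg hnn hμ0.le)
              calc (q*a)^m * μ ≤ 1 * μ := mul_le_mul_of_nonneg_right hle1 hμ0.le
                _ = μ := one_mul μ
                _ ≤ Λ := hμΛ
      have hpref : 0 ≤ K * a^(m*m) * (q^(m*(m-1)/2) * μ^m) * (μ * q^((d+1)*((d+1)-1)/2)) := by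
        have h3 : (0:ℝ) ≤ a^(m*m) := pow_nonneg ha0.le _
        positivity
      calc (K * a^(m*m) * (q^(m*(m-1)/2) * μ^m) * (μ * q^((d+1)*((d+1)-1)/2)))
            * (((q*a)^m)^(d+1) * μ^d)
          ≤ (K * a^(m*m) * (q^(m*(m-1)/2) * μ^m) * (μ * q^((d+1)*((d+1)-1)/2)))
            * ((q*a)^m * Λ^d) := mul_le_mul_of_nonneg_left hcore hpref
        _ = Big * (Λ^d * q^((d+1)*((d+1)-1)/2)) := by rw [hBigdef]; ring
    have hSabs : Summable (fun d : ℕ => |f (d + 1 + m)|) := by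
      have := ((summable_nat_add_iff (m+1)).2 hSf).abs
      exact this.congr (fun d => by rw [show d + (m+1) = d+1+m from by omega])
    have hup : |f m| ≤ Big * T₀ := by
      have hfm : f m = -(∑' d : ℕ, f (d + 1 + m)) := by linarith [hzero]
      calc |f m| = |∑' d : ℕ, f (d + 1 + m)| := by rw [hfm, abs_neg]
        _ ≤ ∑' d : ℕ, |f (d + 1 + m)| := by
            have := norm_tsum_le_tsum_norm (f := fun d : ℕ => f (d+1+m))
              (by simpa [Real.norm_eq_abs] using hSabs)
            simpa [Real.norm_eq_abs] using this
        _ ≤ ∑' d : ℕ, Big * (Λ^d * q^((d+1)*((d+1)-1)/2)) :=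
            Summable.tsum_le_tsum habs hSabs (hT₀sum.mul_left Big)
        _ = Big * T₀ := by rw [tsum_mul_left]
    have hlow : C * a^(m*m) * |c m| ≤ |f m| := by
      have hDpos : 0 < ∏ i ∈ Finset.range m, (a^m - a^i) :=
        lt_of_lt_of_le (by positivity) (hC m)
      show C * a^(m*m) * |c m| ≤ |(∏ i ∈ Finset.range m, (a^m - a^i)) * c m|
      rw [abs_mul (∏ i ∈ Finset.range m, (a^m - a^i)) (c m), abs_of_pos hDpos]
      exact mul_le_mul_of_nonneg_right (hC m) (abs_nonneg _)
    have h1 : C * |c m| ≤ K * (q^(m*(m-1)/2) * μ^m) * ((q*a)^m * μ) * T₀ := by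
      have hpa : (0:ℝ) < a^(m*m) := pow_pos ha0 _
      apply le_of_mul_le_mul_right ?_ hpa
      calc C * |c m| * a^(m*m) = C * a^(m*m) * |c m| := by ring
        _ ≤ Big * T₀ := hlow.trans hup
        _ = (K * (q^(m*(m-1)/2) * μ^m) * ((q*a)^m * μ) * T₀) * a^(m*m) := by
            rw [hBigdef]; ring
    have h2 : K * (q^(m*(m-1)/2) * μ^m) * ((q*a)^m * μ) * T₀
        ≤ K * (q^(m*(m-1)/2) * μ^m) * ((q*a)^m * Λ) * T₀ := by
      apply mul_le_mul_of_nonneg_right ?_ hT₀0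
      apply mul_le_mul_of_nonneg_left
        (mul_le_mul_of_nonneg_left hμΛ (pow_nonneg hqa0 m))
      exact mul_nonneg hK (mul_nonneg (pow_nonneg hq0.le _) (pow_nonneg hμ0.le _))
    have h3 : |c m| * C ≤ K * T₀ * Λ * (q^(m*(m-1)/2) * ((q*a)*μ)^m) := by
      calc |c m| * C = C * |c m| := mul_comm _ _
        _ ≤ K * (q^(m*(m-1)/2) * μ^m) * ((q*a)^m * Λ) * T₀ := h1.trans h2
        _ = K * T₀ * Λ * (q^(m*(m-1)/2) * ((q*a)*μ)^m) := by rw [mul_pow]; ring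
    calc |c m| ≤ (K * T₀ * Λ * (q^(m*(m-1)/2) * ((q*a)*μ)^m)) / C := (le_div_iff₀ hC0).2 h3
      _ = (K * β) * (q^(m*(m-1)/2) * ((q*a)*μ)^m) := by rw [hβdef]; ring
  -- iteration
  have hiter : ∀ n : ℕ, ∀ j, |c j| ≤ (K₀ * β^n) * (q^(j*(j-1)/2) * ((q*a)^n * lam)^j) := by
    intro n
    induction n with
    | zero => simpa using hcbd
    | succ n ih =>
      have hμ0 : 0 < (q*a)^n * lam := by positivity
      have hμΛ : (q*a)^n * lam ≤ Λ := by
        calc (q*a)^n * lam ≤ 1 * lam :=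
              mul_le_mul_of_nonneg_right (pow_le_one₀ hqa0 hqa.le) hlam.le
          _ = lam := one_mul _
          _ ≤ Λ := hlamΛ
      intro j
      have := hstep (K₀ * β^n) ((q*a)^n * lam) (by positivity) hμ0 hμΛ ih j
      calc |c j| ≤ ((K₀ * β^n) * β) * (q^(j*(j-1)/2) * ((q*a)*((q*a)^n * lam))^j) := this
        _ = (K₀ * β^(n+1)) * (q^(j*(j-1)/2) * ((q*a)^(n+1) * lam)^j) := by
            rw [pow_succ, pow_succ]; ring_nf
  -- tail vanishing
  have htail : ∃ m₁ : ℕ, ∀ m, m₁ ≤ m → c m = 0 := by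
    have htd : Tendsto (fun n : ℕ => β * (q*a)^n) atTop (nhds 0) := by
      simpa using (tendsto_pow_atTop_nhds_zero_of_lt_one hqa0 hqa).const_mul β
    obtain ⟨m₁, hm₁⟩ := (htd.eventually_lt_const one_pos).exists_forall_of_atTop
    refine ⟨m₁, fun m hm => ?_⟩
    have hr1 : β * (q*a)^m < 1 := hm₁ m hm
    have hr0 : 0 ≤ β * (q*a)^m := by positivity
    have hbd : ∀ n : ℕ, |c m| ≤ (K₀ * (q^(m*(m-1)/2) * lam^m)) * (β * (q*a)^m)^n := by
      intro n
      calc |c m| ≤ (K₀ * β^n) * (q^(m*(m-1)/2) * ((q*a)^n * lam)^m) := hiter n m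
        _ = (K₀ * (q^(m*(m-1)/2) * lam^m)) * (β * (q*a)^m)^n := by
            ring
    have hlim : Tendsto (fun n : ℕ => (K₀ * (q^(m*(m-1)/2) * lam^m)) * (β * (q*a)^m)^n)
        atTop (nhds 0) := by
      simpa using (tendsto_pow_atTop_nhds_zero_of_lt_one hr0 hr1).const_mul
        (K₀ * (q^(m*(m-1)/2) * lam^m))
    have hle : |c m| ≤ 0 := ge_of_tendsto' hlim (fun n => hbd n)
    exact abs_eq_zero.1 (le_antisymm hle (abs_nonneg _))
  obtain ⟨m₁, hm₁⟩ := htail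
  -- downward induction
  have hall : ∀ n m : ℕ, m₁ ≤ m + n → c m = 0 := by
    intro n
    induction n with
    | zero => intro m hm; exact hm₁ m (by omega)
    | succ n ih =>
      intro m hm
      rcases le_or_gt m₁ (m+n) with hc1 | hc1
      · exact ih m hc1
      · have hsupp : ∀ j : ℕ, j ≠ m → (∏ i ∈ Finset.range m, (a^j - a^i)) * c j = 0 := by
          intro j hj
          rcases lt_or_gt_of_ne hj with hjm | hjm
          · rw [Finset.prod_eq_zero (Finset.mem_range.2 hjm) (sub_self (a^j))]
            ring
          · rw [ih j (by omega), mul_zero]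
        have h0 := hStepA m 0
        have heq : (fun j : ℕ => a^(0*j) * (∏ i ∈ Finset.range m, (a^j - a^i)) * c j)
            = fun j : ℕ => (∏ i ∈ Finset.range m, (a^j - a^i)) * c j := by
          funext j; simp
        rw [heq] at h0
        rw [tsum_eq_single m hsupp] at h0
        have hD : 0 < ∏ i ∈ Finset.range m, (a^m - a^i) := by
          apply Finset.prod_pos
          intro i hi
          have : a^i < a^m := pow_lt_pow_right₀ ha1 (Finset.mem_range.1 hi)
          linarith
        exact (mul_eq_zero.1 h0).resolve_left (ne_of_gt hD)
  have hczero : ∀ m, c m = 0 := fun m => hall m₁ m (by omega)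
  apply hne
  funext j
  have := hczero j
  rw [hcdef] at this
  simp only [] at this
  have := mul_eq_zero.1 this
  rcases this with h1 | h1
  · exact absurd h1 (ne_of_gt (hppos j))
  · exact h1
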